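/- Let d ≥ ℓ ≥ 0 be integers. Let θ be a random variable with values in ℝ and φ a function such that φ(θ) is integrable, E[φ(θ)·cos^ℓ(θ)] = 1, and E[φ(θ)·cos^k(θ)] = 0 for all integers 0 ≤ k ≤ d with k ≠ ℓ. Then E[|φ(θ)|] ≥ |C(d,ℓ)|, where C(d,ℓ) is the coefficient of z^ℓ in the degree-d Chebyshev polynomial T_d. -/

import Mathlib

open MeasureTheory

/-- `C(d, ℓ)`: the coefficient of `z^ℓ` in the degree-`d` Chebyshev polynomial `T_d`. -/
noncomputable def chebCoeff (d ℓ : ℕ) : ℝ := (Polynomial.Chebyshev.T ℝ (d : ℤ)).coeff ℓ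

lemma natDegree_T_le (n : ℕ) : (Polynomial.Chebyshev.T ℝ (n : ℤ)).natDegree ≤ n := by
  induction n using Nat.twoStepInduction with
  | zero => simp [Polynomial.Chebyshev.T_zero]
  | one => simp [Polynomial.Chebyshev.T_one, Polynomial.natDegree_X_le]
  | more n ih1 ih2 =>
    rw [show ((n + 2 : ℕ) : ℤ) = (n : ℤ) + 2 by push_cast; ring,
      Polynomial.Chebyshev.T_add_two]
    refine le_trans (Polynomial.natDegree_sub_le _ _) (max_le ?_ (le_trans ih1 (by omega)))
    refine le_trans (Polynomial.natDegree_mul_le) ?_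
    have h1 : (2 * Polynomial.X : Polynomial ℝ).natDegree ≤ 1 :=
      le_trans (Polynomial.natDegree_mul_le) (by simp)
    have h2 : (Polynomial.Chebyshev.T ℝ ((n : ℤ) + 1)).natDegree ≤ n + 1 := by
      simpa [show ((n + 1 : ℕ) : ℤ) = (n : ℤ) + 1 by push_cast; ring] using ih2
    omega

/-- Optimality of the filter: if `θ` is a real random variable (with distribution `μ`)
and `φ` is a function with `φ(θ)` integrable, `E[φ(θ) cos^ℓ(θ)] = 1`, and
`E[φ(θ) cos^k(θ)] = 0` for all `0 ≤ k ≤ d` with `k ≠ ℓ`, then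
`E[|φ(θ)|] ≥ |C(d,ℓ)|`. -/
theorem stmt8 (d ℓ : ℕ) (hld : ℓ ≤ d)
    (μ : Measure ℝ) [IsProbabilityMeasure μ] (φ : ℝ → ℝ)
    (hint : Integrable φ μ)
    (hl : ∫ θ, φ θ * Real.cos θ ^ ℓ ∂μ = 1)
    (h0 : ∀ k : ℕ, k ≤ d → k ≠ ℓ → ∫ θ, φ θ * Real.cos θ ^ k ∂μ = 0) :
    |chebCoeff d ℓ| ≤ ∫ θ, |φ θ| ∂μ := by
  set P := Polynomial.Chebyshev.T ℝ (d : ℤ) with hP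
  -- integrability of φ * cos^k
  have hik : ∀ k : ℕ, Integrable (fun θ => φ θ * Real.cos θ ^ k) μ := by
    intro k
    have := hint.bdd_mul (f := fun θ => Real.cos θ ^ k)
      ((Real.continuous_cos.pow k).aestronglyMeasurable)
      (Filter.Eventually.of_forall (p := fun x => ‖Real.cos x ^ k‖ ≤ 1) fun x => by
        rw [Real.norm_eq_abs, abs_pow]
        exact pow_le_one₀ (abs_nonneg _) (Real.abs_cos_le_one x))
    exact this.congr (Filter.Eventually.of_forall fun x => mul_comm _ _)
  have hdeg : P.natDegree < d + 1 := Nat.lt_succ_of_le (natDegree_T_le d)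
  -- key identity
  have hkey : ∫ θ, φ θ * P.eval (Real.cos θ) ∂μ = chebCoeff d ℓ := by
    have : ∀ θ : ℝ, φ θ * P.eval (Real.cos θ) =
        ∑ k ∈ Finset.range (d + 1), P.coeff k * (φ θ * Real.cos θ ^ k) := by
      intro θ
      rw [Polynomial.eval_eq_sum_range' hdeg, Finset.mul_sum]
      exact Finset.sum_congr rfl fun k _ => by ring
    simp_rw [this]
    rw [integral_finset_sum _ fun k _ => (hik k).const_mul _]
    have : ∀ k ∈ Finset.range (d + 1),
        ∫ θ, P.coeff k * (φ θ * Real.cos θ ^ k) ∂μ =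
          if k = ℓ then P.coeff ℓ else 0 := by
      intro k hk
      rw [integral_const_mul]
      by_cases h : k = ℓ
      · subst h; rw [hl, mul_one, if_pos rfl]
      · rw [h0 k (Nat.lt_succ_iff.mp (Finset.mem_range.mp hk)) h, mul_zero, if_neg h]
    rw [Finset.sum_congr rfl this, Finset.sum_ite_eq' (Finset.range (d + 1)) ℓ,
      if_pos (Finset.mem_range.mpr (Nat.lt_succ_of_le hld))]
    rfl
  -- boundedness of eval
  have hbd : ∀ θ : ℝ, |P.eval (Real.cos θ)| ≤ 1 := by
    intro θ
    rw [hP, Polynomial.Chebyshev.T_real_cos]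
    exact Real.abs_cos_le_one _
  have hintP : Integrable (fun θ => φ θ * P.eval (Real.cos θ)) μ := by
    have := hint.bdd_mul (f := fun θ => P.eval (Real.cos θ))
      ((P.continuous_aeval.comp Real.continuous_cos).aestronglyMeasurable)
      (Filter.Eventually.of_forall (p := fun x => ‖P.eval (Real.cos x)‖ ≤ 1) fun x => by simpa [Real.norm_eq_abs] using hbd x)
    exact this.congr (Filter.Eventually.of_forall fun x => mul_comm _ _)
  calc |chebCoeff d ℓ| = |∫ θ, φ θ * P.eval (Real.cos θ) ∂μ| := by rw [hkey]
    _ ≤ ∫ θ, |φ θ * P.eval (Real.cos θ)| ∂μ := by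
        simpa [Real.norm_eq_abs, abs_mul] using norm_integral_le_integral_norm
          (fun θ => φ θ * P.eval (Real.cos θ)) (μ := μ)
    _ ≤ ∫ θ, |φ θ| ∂μ := by
        refine integral_mono hintP.abs hint.abs fun θ => ?_
        rw [abs_mul]
        exact mul_le_of_le_one_right (abs_nonneg _) (hbd θ)
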